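/- arXiv:1909.07800 — 7 statements merged into one kernel-verified Lean document; each statement's English description precedes it below -/
import Mathlib

section
/- Let A and B be groups, let w ∈ F_∞ be a word in n letters, let W = {w}, and let g ∈ (A ∗ B)^n. Then there exists u ∈ W(A ∗ B) ∩ [A,B] such that w(g) = w(π_A(g)) · w(π_B(g)) · u, where π_A : A ∗ B → A and π_B : A ∗ B → B are the canonical projections applied coordinatewise. Moreover this decomposition is unique: if w(g) = a·b·c with a ∈ A, b ∈ B and c ∈ [A,B], then a = w(π_A(g)), b = w(π_B(g)) and c = u. -/
open Monoid
open scoped commutatorElement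

/-- The verbal subgroup `W(G)`: the subgroup of `G` generated by all evaluations of the
words of `W` at tuples of elements of `G`. -/
def verbalSubgroup (W : Set (FreeGroup ℕ)) (G : Type*) [Group G] : Subgroup G :=
  Subgroup.closure {x | ∃ w ∈ W, ∃ f : ℕ → G, FreeGroup.lift f w = x}

/-- The subgroup `[A,B]` of the free product `A ∗ B` generated by the commutators
`[a,b] = a * b * a⁻¹ * b⁻¹` with `a ∈ A`, `b ∈ B`. -/
def commSubgroup (A B : Type*) [Group A] [Group B] : Subgroup (Coprod A B) :=
  Subgroup.closure {x | ∃ (a : A) (b : B), x = ⁅(Coprod.inl a : Coprod A B), Coprod.inr b⁆}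

section Aux

variable {A B : Type*} [Group A] [Group B]

theorem commSubgroup_le_ker_fst : commSubgroup A B ≤ (Coprod.fst : Coprod A B →* A).ker := by
  rw [commSubgroup, Subgroup.closure_le]
  rintro x ⟨a, b, rfl⟩
  simp [MonoidHom.mem_ker, commutatorElement_def]

theorem commSubgroup_le_ker_snd : commSubgroup A B ≤ (Coprod.snd : Coprod A B →* B).ker := by
  rw [commSubgroup, Subgroup.closure_le]
  rintro x ⟨a, b, rfl⟩
  simp [MonoidHom.mem_ker, commutatorElement_def]

theorem comm_conj_inl (a : A) {x : Coprod A B} (hx : x ∈ commSubgroup A B) :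
    Coprod.inl a * x * (Coprod.inl a)⁻¹ ∈ commSubgroup A B := by
  induction hx using Subgroup.closure_induction with
  | one => simpa using (commSubgroup A B).one_mem
  | mul y z _ _ hy hz =>
      have := (commSubgroup A B).mul_mem hy hz
      convert this using 1; group
  | inv y _ hy =>
      have := (commSubgroup A B).inv_mem hy
      convert this using 1; group
  | mem y hy =>
      obtain ⟨a', b, rfl⟩ := hy
      have h1 : (⁅(Coprod.inl (a * a') : Coprod A B), Coprod.inr b⁆ : Coprod A B)
          ∈ commSubgroup A B := Subgroup.subset_closure ⟨_, _, rfl⟩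
      have h2 : (⁅(Coprod.inl a : Coprod A B), Coprod.inr b⁆ : Coprod A B)
          ∈ commSubgroup A B := Subgroup.subset_closure ⟨_, _, rfl⟩
      have := (commSubgroup A B).mul_mem h1 ((commSubgroup A B).inv_mem h2)
      convert this using 1
      simp only [commutatorElement_def, map_mul, mul_inv_rev]
      group

theorem comm_conj_inr (b : B) {x : Coprod A B} (hx : x ∈ commSubgroup A B) :
    Coprod.inr b * x * (Coprod.inr b)⁻¹ ∈ commSubgroup A B := by
  induction hx using Subgroup.closure_induction with
  | one => simpa using (commSubgroup A B).one_mem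
  | mul y z _ _ hy hz =>
      have := (commSubgroup A B).mul_mem hy hz
      convert this using 1; group
  | inv y _ hy =>
      have := (commSubgroup A B).inv_mem hy
      convert this using 1; group
  | mem y hy =>
      obtain ⟨a, b', rfl⟩ := hy
      have h1 : (⁅(Coprod.inl a : Coprod A B), Coprod.inr b⁆ : Coprod A B)
          ∈ commSubgroup A B := Subgroup.subset_closure ⟨_, _, rfl⟩
      have h2 : (⁅(Coprod.inl a : Coprod A B), Coprod.inr (b * b')⁆ : Coprod A B)
          ∈ commSubgroup A B := Subgroup.subset_closure ⟨_, _, rfl⟩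
      have := (commSubgroup A B).mul_mem ((commSubgroup A B).inv_mem h1) h2
      convert this using 1
      simp only [commutatorElement_def, map_mul, mul_inv_rev]
      group

instance commSubgroup_normal : (commSubgroup A B).Normal := by
  constructor
  intro n hn gg
  revert n
  have hgg : gg ∈ Subgroup.closure (Set.range (Coprod.inl : A →* Coprod A B) ∪
      Set.range (Coprod.inr : B →* Coprod A B)) := by
    rw [Coprod.closure_range_inl_union_inr]; trivial
  have key : ∀ n ∈ commSubgroup A B,
      gg * n * gg⁻¹ ∈ commSubgroup A B ∧ gg⁻¹ * n * gg ∈ commSubgroup A B := by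
    induction hgg using Subgroup.closure_induction with
    | one =>
        intro n hn
        simp only [one_mul, mul_one, inv_one]
        exact ⟨hn, hn⟩
    | mul y z _ _ hy hz =>
        intro n hn
        constructor
        · have := (hy _ ((hz n hn).1)).1
          convert this using 1; group
        · have := (hz _ ((hy n hn).2)).2
          convert this using 1; group
    | inv y _ hy =>
        intro n hn
        refine ⟨?_, ?_⟩
        · have := (hy n hn).2; convert this using 1; group
        · have := (hy n hn).1; convert this using 1; group
    | mem y hy =>
        intro n hn
        rcases hy with ⟨a, rfl⟩ | ⟨b, rfl⟩
        · refine ⟨comm_conj_inl a hn, ?_⟩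
          have := comm_conj_inl a⁻¹ hn
          simpa [map_inv] using this
        · refine ⟨comm_conj_inr b hn, ?_⟩
          have := comm_conj_inr b⁻¹ hn
          simpa [map_inv] using this
  exact fun n hn => (key n hn).1

theorem mem_commSubgroup_of_fst_snd {x : Coprod A B}
    (h1 : Coprod.fst x = 1) (h2 : Coprod.snd x = 1) : x ∈ commSubgroup A B := by
  set K := commSubgroup A B
  let q : Coprod A B →* Coprod A B ⧸ K := QuotientGroup.mk' K
  have comm : ∀ (a : A) (b : B), Commute (q (Coprod.inl a)) (q (Coprod.inr b)) := by
    intro a b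
    rw [← commutatorElement_eq_one_iff_commute, ← map_commutatorElement]
    rw [← MonoidHom.mem_ker, QuotientGroup.ker_mk']
    exact Subgroup.subset_closure ⟨a, b, rfl⟩
  let ψ : A × B →* Coprod A B ⧸ K :=
    (q.comp Coprod.inl).noncommCoprod (q.comp Coprod.inr) comm
  have hψ : ψ.comp ((Coprod.fst : Coprod A B →* A).prod Coprod.snd) = q := by
    apply Coprod.hom_ext <;> ext x <;>
      simp [ψ, MonoidHom.noncommCoprod_apply]
  have : q x = 1 := by
    have hq : q x = ψ (Coprod.fst x, Coprod.snd x) := by rw [← hψ]; rfl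
    rw [hq, h1, h2]
    exact map_one ψ
  rwa [← QuotientGroup.ker_mk' K, MonoidHom.mem_ker]

end Aux

/-- Unique decomposition `w(g) = w(π_A(g)) · w(π_B(g)) · u` with
`u ∈ W(A ∗ B) ∩ [A,B]`, for a single word `w` and `W = {w}`. -/
theorem word_eval_decomposition {A B : Type*} [Group A] [Group B]
    (w : FreeGroup ℕ) (g : ℕ → Coprod A B) :
    ∃ u ∈ verbalSubgroup {w} (Coprod A B) ⊓ commSubgroup A B,
      FreeGroup.lift g w =
        Coprod.inl (FreeGroup.lift (fun i => Coprod.fst (g i)) w) *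
          Coprod.inr (FreeGroup.lift (fun i => Coprod.snd (g i)) w) * u ∧
      ∀ (a : A) (b : B), ∀ c ∈ commSubgroup A B,
        FreeGroup.lift g w = Coprod.inl a * Coprod.inr b * c →
          a = FreeGroup.lift (fun i => Coprod.fst (g i)) w ∧
          b = FreeGroup.lift (fun i => Coprod.snd (g i)) w ∧ c = u := by
  set E : Coprod A B := FreeGroup.lift g w with hE
  set EA : A := FreeGroup.lift (fun i => Coprod.fst (g i)) w with hEA
  set EB : B := FreeGroup.lift (fun i => Coprod.snd (g i)) w with hEB
  have hfstE : Coprod.fst E = EA := by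
    rw [hE, hEA]
    have : (Coprod.fst : Coprod A B →* A).comp (FreeGroup.lift g) =
        FreeGroup.lift (fun i => Coprod.fst (g i)) :=
      FreeGroup.ext_hom _ _ (by simp)
    exact congrFun (congrArg (fun h => h.toFun) this) w
  have hsndE : Coprod.snd E = EB := by
    rw [hE, hEB]
    have : (Coprod.snd : Coprod A B →* B).comp (FreeGroup.lift g) =
        FreeGroup.lift (fun i => Coprod.snd (g i)) :=
      FreeGroup.ext_hom _ _ (by simp)
    exact congrFun (congrArg (fun h => h.toFun) this) w
  refine ⟨(Coprod.inl EA * Coprod.inr EB)⁻¹ * E, ⟨?_, ?_⟩, by group, ?_⟩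
  · -- verbal subgroup membership
    have hmemE : E ∈ verbalSubgroup {w} (Coprod A B) :=
      Subgroup.subset_closure ⟨w, rfl, g, rfl⟩
    have hmemA : (Coprod.inl EA : Coprod A B) ∈ verbalSubgroup {w} (Coprod A B) := by
      refine Subgroup.subset_closure ⟨w, rfl, fun i => Coprod.inl (Coprod.fst (g i)), ?_⟩
      rw [hEA]
      have : FreeGroup.lift (fun i => (Coprod.inl (Coprod.fst (g i)) : Coprod A B)) =
          (Coprod.inl : A →* Coprod A B).comp
            (FreeGroup.lift (fun i => Coprod.fst (g i))) :=
        FreeGroup.ext_hom _ _ (by simp)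
      exact congrFun (congrArg (fun h => h.toFun) this) w
    have hmemB : (Coprod.inr EB : Coprod A B) ∈ verbalSubgroup {w} (Coprod A B) := by
      refine Subgroup.subset_closure ⟨w, rfl, fun i => Coprod.inr (Coprod.snd (g i)), ?_⟩
      rw [hEB]
      have : FreeGroup.lift (fun i => (Coprod.inr (Coprod.snd (g i)) : Coprod A B)) =
          (Coprod.inr : B →* Coprod A B).comp
            (FreeGroup.lift (fun i => Coprod.snd (g i))) :=
        FreeGroup.ext_hom _ _ (by simp)
      exact congrFun (congrArg (fun h => h.toFun) this) w
    exact Subgroup.mul_mem _ (Subgroup.inv_mem _ (Subgroup.mul_mem _ hmemA hmemB)) hmemE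
  · -- commSubgroup membership
    apply mem_commSubgroup_of_fst_snd
    · simp [hfstE]
    · simp [hsndE]
  · rintro a b c hc hdec
    have hc1 : Coprod.fst c = 1 := MonoidHom.mem_ker.mp (commSubgroup_le_ker_fst hc)
    have hc2 : Coprod.snd c = 1 := MonoidHom.mem_ker.mp (commSubgroup_le_ker_snd hc)
    have ha : a = EA := by
      have := congrArg (Coprod.fst : Coprod A B →* A) hdec
      simpa [hfstE, hc1] using this.symm
    have hb : b = EB := by
      have := congrArg (Coprod.snd : Coprod A B →* B) hdec
      simpa [hsndE, hc2] using this.symm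
    refine ⟨ha, hb, ?_⟩
    subst ha hb
    rw [hdec]
    group
end

section
/- Let A and B be groups and W ⊆ F_∞ a set of words. If W(A) = {1} and W(B) = {1}, then W(A ∗ B) ⊆ [A,B]. -/
open Monoid
open scoped commutatorElement

namespace VerbalAux

variable {A B : Type*} [Group A] [Group B]

lemma mem_comm (a : A) (b : B) :
    ⁅(Coprod.inl a : Coprod A B), Coprod.inr b⁆ ∈ commSubgroup A B :=
  Subgroup.subset_closure ⟨a, b, rfl⟩

/-- conjugation of a single generator-commutator stays in the subgroup -/
lemma conj_gen_mem (g : Coprod A B) (hg : ∀ a b,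
      g * ⁅(Coprod.inl a : Coprod A B), Coprod.inr b⁆ * g⁻¹ ∈ commSubgroup A B)
    (n : Coprod A B) (hn : n ∈ commSubgroup A B) :
    g * n * g⁻¹ ∈ commSubgroup A B := by
  induction hn using Subgroup.closure_induction with
  | mem x hx => obtain ⟨a, b, rfl⟩ := hx; exact hg a b
  | one => simpa using (commSubgroup A B).one_mem
  | mul x y _ _ hx hy =>
    have : g * (x * y) * g⁻¹ = (g * x * g⁻¹) * (g * y * g⁻¹) := by group
    rw [this]; exact (commSubgroup A B).mul_mem hx hy
  | inv x _ hx =>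
    have : g * x⁻¹ * g⁻¹ = (g * x * g⁻¹)⁻¹ := by group
    rw [this]; exact (commSubgroup A B).inv_mem hx

lemma conj_inl (a a' : A) (b : B) :
    Coprod.inl a * ⁅(Coprod.inl a' : Coprod A B), Coprod.inr b⁆ * (Coprod.inl a)⁻¹
      ∈ commSubgroup A B := by
  have key : Coprod.inl a * ⁅(Coprod.inl a' : Coprod A B), Coprod.inr b⁆ * (Coprod.inl a)⁻¹
      = ⁅(Coprod.inl (a * a') : Coprod A B), Coprod.inr b⁆ *
        ⁅(Coprod.inl a : Coprod A B), Coprod.inr b⁆⁻¹ := by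
    simp only [commutatorElement_def, map_mul]
    group
  rw [key]
  exact (commSubgroup A B).mul_mem (mem_comm _ _) ((commSubgroup A B).inv_mem (mem_comm _ _))

lemma conj_inr (b : B) (a : A) (b' : B) :
    (Coprod.inr b : Coprod A B) * ⁅(Coprod.inl a : Coprod A B), Coprod.inr b'⁆ *
      (Coprod.inr b : Coprod A B)⁻¹ ∈ commSubgroup A B := by
  have key : (Coprod.inr b : Coprod A B) * ⁅(Coprod.inl a : Coprod A B), Coprod.inr b'⁆ *
      (Coprod.inr b : Coprod A B)⁻¹
      = ⁅(Coprod.inl a : Coprod A B), Coprod.inr b⁆⁻¹ *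
        ⁅(Coprod.inl a : Coprod A B), Coprod.inr (b * b')⁆ := by
    simp only [commutatorElement_def, map_mul]
    group
  rw [key]
  exact (commSubgroup A B).mul_mem ((commSubgroup A B).inv_mem (mem_comm _ _)) (mem_comm _ _)

instance normal : (commSubgroup A B).Normal := by
  constructor
  intro n hn g
  -- the set of g satisfying the conjugation property (in both directions) contains inl, inr
  -- and is closed under mul, so use induction
  revert n
  have main : ∀ g : Coprod A B,
      (∀ n ∈ commSubgroup A B, g * n * g⁻¹ ∈ commSubgroup A B) ∧
      (∀ n ∈ commSubgroup A B, g⁻¹ * n * g ∈ commSubgroup A B) := by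
    intro g
    induction g using Coprod.induction_on with
    | inl a =>
      constructor
      · exact conj_gen_mem _ (fun a' b => conj_inl a a' b)
      · intro n hn
        have := conj_gen_mem ((Coprod.inl a : Coprod A B)⁻¹) ?_ n hn
        · simpa using this
        · intro a' b
          have : ((Coprod.inl a : Coprod A B))⁻¹ = Coprod.inl a⁻¹ := by simp
          rw [this]
          exact conj_inl a⁻¹ a' b
    | inr b =>
      constructor
      · exact conj_gen_mem _ (fun a b' => conj_inr b a b')
      · intro n hn
        have := conj_gen_mem ((Coprod.inr b : Coprod A B)⁻¹) ?_ n hn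
        · simpa using this
        · intro a b'
          have : ((Coprod.inr b : Coprod A B))⁻¹ = Coprod.inr b⁻¹ := by simp
          rw [this]
          exact conj_inr b⁻¹ a b'
    | mul x y hx hy =>
      constructor
      · intro n hn
        have h1 := hy.1 n hn
        have h2 := hx.1 _ h1
        have : x * (y * n * y⁻¹) * x⁻¹ = (x * y) * n * (x * y)⁻¹ := by group
        rwa [this] at h2
      · intro n hn
        have h1 := hx.2 n hn
        have h2 := hy.2 _ h1
        have : y⁻¹ * (x⁻¹ * n * x) * y = (x * y)⁻¹ * n * (x * y) := by group
        rwa [this] at h2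
  intro n hn
  exact (main g).1 n hn

/-- The canonical projection `A ∗ B →* A × B`. -/
noncomputable def π : Coprod A B →* A × B :=
  Coprod.lift (MonoidHom.inl A B) (MonoidHom.inr A B)

lemma ker_le_comm : (π : Coprod A B →* A × B).ker ≤ commSubgroup A B := by
  intro x hx
  set q := QuotientGroup.mk' (commSubgroup A B)
  have hcomm : ∀ (a : A) (b : B),
      Commute (q (Coprod.inl a)) (q (Coprod.inr b)) := by
    intro a b
    rw [Commute, SemiconjBy, ← commutatorElement_eq_one_iff_mul_comm (g₁ := q (Coprod.inl a))]
    rw [← map_commutatorElement]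
    rw [QuotientGroup.mk'_apply, QuotientGroup.eq_one_iff]
    exact mem_comm a b
  set φ : A × B →* Coprod A B ⧸ commSubgroup A B :=
    (q.comp Coprod.inl).noncommCoprod (q.comp Coprod.inr) hcomm
  have hfac : φ.comp (π : Coprod A B →* A × B) = q := by
    apply Coprod.hom_ext
    · ext a
      simp [φ, π, Coprod.lift_apply_inl]
    · ext b
      simp [φ, π, Coprod.lift_apply_inr]
  have : q x = 1 := by
    rw [← hfac]
    simp only [MonoidHom.comp_apply]
    rw [MonoidHom.mem_ker.mp hx, map_one]
  rwa [QuotientGroup.mk'_apply, QuotientGroup.eq_one_iff] at this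

end VerbalAux

/-- If `W(A)` and `W(B)` are trivial then `W(A ∗ B) ⊆ [A,B]`. -/
theorem verbalSubgroup_coprod_le_commSubgroup {A B : Type*} [Group A] [Group B]
    (W : Set (FreeGroup ℕ)) (hA : verbalSubgroup W A = ⊥) (hB : verbalSubgroup W B = ⊥) :
    verbalSubgroup W (Coprod A B) ≤ commSubgroup A B := by
  refine le_trans ?_ VerbalAux.ker_le_comm
  rw [verbalSubgroup, Subgroup.closure_le]
  rintro x ⟨w, hw, f, rfl⟩
  rw [SetLike.mem_coe, MonoidHom.mem_ker]
  have h1 : ∀ (h : Coprod A B →* A) (f : ℕ → Coprod A B),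
      h (FreeGroup.lift f w) = FreeGroup.lift (fun i => h (f i)) w := by
    intro h f
    have : h.comp (FreeGroup.lift f) = FreeGroup.lift (fun i => h (f i)) :=
      FreeGroup.ext_hom _ _ (fun a => by simp)
    exact DFunLike.congr_fun this w
  have h1' : ∀ (h : Coprod A B →* B) (f : ℕ → Coprod A B),
      h (FreeGroup.lift f w) = FreeGroup.lift (fun i => h (f i)) w := by
    intro h f
    have : h.comp (FreeGroup.lift f) = FreeGroup.lift (fun i => h (f i)) :=
      FreeGroup.ext_hom _ _ (fun a => by simp)
    exact DFunLike.congr_fun this w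
  have memA : FreeGroup.lift (fun i => ((MonoidHom.fst A B).comp VerbalAux.π) (f i)) w = 1 := by
    have : FreeGroup.lift (fun i => ((MonoidHom.fst A B).comp VerbalAux.π) (f i)) w
        ∈ verbalSubgroup W A :=
      Subgroup.subset_closure ⟨w, hw, _, rfl⟩
    rwa [hA, Subgroup.mem_bot] at this
  have memB : FreeGroup.lift (fun i => ((MonoidHom.snd A B).comp VerbalAux.π) (f i)) w = 1 := by
    have : FreeGroup.lift (fun i => ((MonoidHom.snd A B).comp VerbalAux.π) (f i)) w
        ∈ verbalSubgroup W B :=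
      Subgroup.subset_closure ⟨w, hw, _, rfl⟩
    rwa [hB, Subgroup.mem_bot] at this
  apply Prod.ext
  · rw [show (VerbalAux.π (FreeGroup.lift f w)).1
        = ((MonoidHom.fst A B).comp VerbalAux.π) (FreeGroup.lift f w) from rfl,
      h1 ((MonoidHom.fst A B).comp VerbalAux.π) f, memA]; rfl
  · rw [show (VerbalAux.π (FreeGroup.lift f w)).2
        = ((MonoidHom.snd A B).comp VerbalAux.π) (FreeGroup.lift f w) from rfl,
      h1' ((MonoidHom.snd A B).comp VerbalAux.π) f, memB]; rfl
end

section
/- Let A and B be groups and W ⊆ F_∞ a set of words. Regard A and B as subgroups of the verbal product A ∗_W B. If a ∈ W(A), then a commutes with every element of B in A ∗_W B, and a commutes with every element of [A,B]^w in A ∗_W B. -/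
open Monoid
open scoped commutatorElement

theorem lift_comp_eval {G H : Type*} [Group G] [Group H] (φ : G →* H) (f : ℕ → G)
    (w : FreeGroup ℕ) : φ (FreeGroup.lift f w) = FreeGroup.lift (φ ∘ f) w := by
  have h : φ.comp (FreeGroup.lift f) = FreeGroup.lift (φ ∘ f) :=
    FreeGroup.ext_hom _ _ (fun a => by simp)
  exact DFunLike.congr_fun h w

theorem verbalSubgroup_map_le {G H : Type*} [Group G] [Group H] (W : Set (FreeGroup ℕ))
    (φ : G →* H) : (verbalSubgroup W G).map φ ≤ verbalSubgroup W H := by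
  rw [verbalSubgroup, MonoidHom.map_closure, Subgroup.closure_le]
  rintro x ⟨y, ⟨w, hw, f, rfl⟩, rfl⟩
  exact Subgroup.subset_closure ⟨w, hw, φ ∘ f, (lift_comp_eval φ f w).symm⟩

/-- Verbal subgroups are normal. -/
instance verbalSubgroup_normal (W : Set (FreeGroup ℕ)) (G : Type*) [Group G] :
    (verbalSubgroup W G).Normal := by
  constructor
  intro n hn g
  have h := verbalSubgroup_map_le (G := G) (H := G) W (MulAut.conj g).toMonoidHom
  have h2 : (MulAut.conj g).toMonoidHom n ∈ verbalSubgroup W G := h ⟨n, hn, rfl⟩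
  simpa using h2

/-- The kernel of the verbal product: (the normal closure of) `W(A ∗ B) ∩ [A,B]`.
Since `W(A ∗ B) ∩ [A,B]` is in fact a normal subgroup of `A ∗ B`, taking the normal
closure does not change the subgroup. -/
def verbalProductKer (W : Set (FreeGroup ℕ)) (A B : Type*) [Group A] [Group B] :
    Subgroup (Coprod A B) :=
  Subgroup.normalClosure ((verbalSubgroup W (Coprod A B) ⊓ commSubgroup A B : Subgroup _) : Set _)

instance verbalProductKer_normal (W : Set (FreeGroup ℕ)) (A B : Type*) [Group A] [Group B] :
    (verbalProductKer W A B).Normal := Subgroup.normalClosure_normal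

/-- The verbal product `A ∗_W B := (A ∗ B)/(W(A ∗ B) ∩ [A,B])`. -/
abbrev VerbalProduct (W : Set (FreeGroup ℕ)) (A B : Type*) [Group A] [Group B] : Type _ :=
  Coprod A B ⧸ verbalProductKer W A B

/-- The quotient homomorphism `q : A ∗ B → A ∗_W B`. -/
def vq (W : Set (FreeGroup ℕ)) (A B : Type*) [Group A] [Group B] :
    Coprod A B →* VerbalProduct W A B :=
  QuotientGroup.mk' (verbalProductKer W A B)

/-- The copy of `A` inside the verbal product `A ∗_W B`. -/
def vinl (W : Set (FreeGroup ℕ)) (A B : Type*) [Group A] [Group B] :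
    A →* VerbalProduct W A B := (vq W A B).comp Coprod.inl

/-- The copy of `B` inside the verbal product `A ∗_W B`. -/
def vinr (W : Set (FreeGroup ℕ)) (A B : Type*) [Group A] [Group B] :
    B →* VerbalProduct W A B := (vq W A B).comp Coprod.inr

/-- `[A,B]^w`, the image of `[A,B]` in the verbal product `A ∗_W B`. -/
def commW (W : Set (FreeGroup ℕ)) (A B : Type*) [Group A] [Group B] :
    Subgroup (VerbalProduct W A B) := (commSubgroup A B).map (vq W A B)

theorem commSubgroup_normal_s7 (A B : Type*) [Group A] [Group B] :
    (commSubgroup A B).Normal := by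
  have key : ∀ g : Coprod A B, ∀ n ∈ commSubgroup A B,
      g * n * g⁻¹ ∈ commSubgroup A B := by
    intro g
    induction g using Coprod.induction_on with
    | inl a' =>
      intro n hn
      refine Subgroup.closure_induction ?_ ?_ ?_ ?_ hn
      · rintro x ⟨a, b, rfl⟩
        have hid : Coprod.inl a' * ⁅(Coprod.inl a : Coprod A B), Coprod.inr b⁆ *
            (Coprod.inl a')⁻¹ =
            ⁅(Coprod.inl (a' * a) : Coprod A B), Coprod.inr b⁆ *
            ⁅(Coprod.inl a' : Coprod A B), Coprod.inr b⁆⁻¹ := by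
          simp only [map_mul]
          group
        rw [hid]
        exact mul_mem (Subgroup.subset_closure ⟨a' * a, b, rfl⟩)
          (inv_mem (Subgroup.subset_closure ⟨a', b, rfl⟩))
      · simpa using one_mem (commSubgroup A B)
      · intro x y _ _ hx hy
        have : Coprod.inl a' * (x * y) * (Coprod.inl a')⁻¹ =
            (Coprod.inl a' * x * (Coprod.inl a')⁻¹) *
            (Coprod.inl a' * y * (Coprod.inl a')⁻¹) := by group
        rw [this]; exact mul_mem hx hy
      · intro x _ hx
        have : Coprod.inl a' * x⁻¹ * (Coprod.inl a')⁻¹ =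
            (Coprod.inl a' * x * (Coprod.inl a')⁻¹)⁻¹ := by group
        rw [this]; exact inv_mem hx
    | inr b' =>
      intro n hn
      refine Subgroup.closure_induction ?_ ?_ ?_ ?_ hn
      · rintro x ⟨a, b, rfl⟩
        have hid : Coprod.inr b' * ⁅(Coprod.inl a : Coprod A B), Coprod.inr b⁆ *
            (Coprod.inr b')⁻¹ =
            ⁅(Coprod.inl a : Coprod A B), (Coprod.inr b' : Coprod A B)⁆⁻¹ *
            ⁅(Coprod.inl a : Coprod A B), Coprod.inr (b' * b)⁆ := by
          simp only [map_mul]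
          group
        rw [hid]
        exact mul_mem (inv_mem (Subgroup.subset_closure ⟨a, b', rfl⟩))
          (Subgroup.subset_closure ⟨a, b' * b, rfl⟩)
      · simpa using one_mem (commSubgroup A B)
      · intro x y _ _ hx hy
        have : Coprod.inr b' * (x * y) * (Coprod.inr b')⁻¹ =
            (Coprod.inr b' * x * (Coprod.inr b')⁻¹) *
            (Coprod.inr b' * y * (Coprod.inr b')⁻¹) := by group
        rw [this]; exact mul_mem hx hy
      · intro x _ hx
        have : Coprod.inr b' * x⁻¹ * (Coprod.inr b')⁻¹ =
            (Coprod.inr b' * x * (Coprod.inr b')⁻¹)⁻¹ := by group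
        rw [this]; exact inv_mem hx
    | mul g h hg hh =>
      intro n hn
      have : g * h * n * (g * h)⁻¹ = g * (h * n * h⁻¹) * g⁻¹ := by group
      rw [this]
      exact hg _ (hh _ hn)
  exact ⟨fun n hn g => key g n hn⟩

/-- If `a ∈ W(A)`, then (the image of) `a` commutes with every element of `B` and with
every element of `[A,B]^w` in the verbal product `A ∗_W B`. -/
theorem verbal_element_commutes {A B : Type*} [Group A] [Group B]
    (W : Set (FreeGroup ℕ)) (a : A) (ha : a ∈ verbalSubgroup W A) :
    (∀ b : B, Commute (vinl W A B a) (vinr W A B b)) ∧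
    (∀ u ∈ commW W A B, Commute (vinl W A B a) u) := by
  have hnormC := commSubgroup_normal_s7 A B
  have haV : Coprod.inl a ∈ verbalSubgroup W (Coprod A B) :=
    verbalSubgroup_map_le W Coprod.inl ⟨a, ha, rfl⟩
  -- commutators of `inl a` with anything lie in the verbal subgroup
  have hcommV : ∀ g : Coprod A B,
      ⁅(Coprod.inl a : Coprod A B), g⁆ ∈ verbalSubgroup W (Coprod A B) := by
    intro g
    have h1 : g * (Coprod.inl a)⁻¹ * g⁻¹ ∈ verbalSubgroup W (Coprod A B) :=
      (verbalSubgroup_normal W (Coprod A B)).conj_mem _ (inv_mem haV) g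
    have : ⁅(Coprod.inl a : Coprod A B), g⁆ = Coprod.inl a * (g * (Coprod.inl a)⁻¹ * g⁻¹) := by group
    rw [this]; exact mul_mem haV h1
  have hker : ∀ g ∈ commSubgroup A B,
      ⁅(Coprod.inl a : Coprod A B), g⁆ ∈ verbalProductKer W A B := by
    intro g hg
    have h1 : Coprod.inl a * g * (Coprod.inl a)⁻¹ ∈ commSubgroup A B :=
      hnormC.conj_mem _ hg _
    have h2 : ⁅(Coprod.inl a : Coprod A B), g⁆ ∈ commSubgroup A B := by
      have : ⁅(Coprod.inl a : Coprod A B), g⁆ =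
          (Coprod.inl a * g * (Coprod.inl a)⁻¹) * g⁻¹ := by group
      rw [this]; exact mul_mem h1 (inv_mem hg)
    exact Subgroup.subset_normalClosure (Subgroup.mem_inf.mpr ⟨hcommV g, h2⟩)
  have hq : ∀ g : Coprod A B, ⁅(Coprod.inl a : Coprod A B), g⁆ ∈ verbalProductKer W A B →
      Commute (vq W A B (Coprod.inl a)) (vq W A B g) := by
    intro g h
    rw [← commutatorElement_eq_one_iff_commute, ← map_commutatorElement]
    exact (QuotientGroup.eq_one_iff _).mpr h
  constructor
  · intro b
    refine hq (Coprod.inr b) (Subgroup.subset_normalClosure (Subgroup.mem_inf.mpr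
      ⟨hcommV _, Subgroup.subset_closure ⟨a, b, rfl⟩⟩))
  · rintro u ⟨g, hg, rfl⟩
    exact hq g (hker g hg)
end

section
/- Let A and B be groups, W ⊆ F_∞ a set of words, M a normal subgroup of A, N a normal subgroup of B, and φ : A ∗ B → (A/M) ∗ (B/N) the natural homomorphism. Then φ(W(A ∗ B) ∩ [A,B]) = W((A/M) ∗ (B/N)) ∩ [A/M, B/N]. -/
open Monoid
open scoped commutatorElement

section Aux

variable {G G' : Type*} [Group G] [Group G']

lemma mem_verbal_map {W : Set (FreeGroup ℕ)} (f : G →* G') {x : G}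
    (hx : x ∈ verbalSubgroup W G) : f x ∈ verbalSubgroup W G' := by
  induction hx using Subgroup.closure_induction with
  | mem x hx =>
    obtain ⟨w, hw, g, rfl⟩ := hx
    refine Subgroup.subset_closure ⟨w, hw, f ∘ g, ?_⟩
    exact (FreeGroup.lift_unique (f.comp (FreeGroup.lift g)) (fun x => by simp)).symm
  | one => simpa using one_mem _
  | mul x y hx hy ihx ihy => simpa using mul_mem ihx ihy
  | inv x hx ihx => simpa using inv_mem ihx

lemma verbal_le_map {W : Set (FreeGroup ℕ)} (f : G →* G') (hf : Function.Surjective f) :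
    verbalSubgroup W G' ≤ (verbalSubgroup W G).map f := by
  rw [verbalSubgroup, Subgroup.closure_le]
  rintro x ⟨w, hw, g, rfl⟩
  refine ⟨FreeGroup.lift (fun n => (hf (g n)).choose) w,
    Subgroup.subset_closure ⟨w, hw, _, rfl⟩, ?_⟩
  rw [← FreeGroup.lift_unique (f.comp (FreeGroup.lift fun n => (hf (g n)).choose))
    (fun x => by simp [(hf (g x)).choose_spec])]
  rfl

variable {A B A' B' : Type*} [Group A] [Group B] [Group A'] [Group B']

lemma mem_comm_map (f : A →* A') (g : B →* B') {x : Coprod A B}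
    (hx : x ∈ commSubgroup A B) : Coprod.map f g x ∈ commSubgroup A' B' := by
  induction hx using Subgroup.closure_induction with
  | mem x hx =>
    obtain ⟨a, b, rfl⟩ := hx
    refine Subgroup.subset_closure ⟨f a, g b, ?_⟩
    simp [map_commutatorElement]
  | one => simpa using one_mem _
  | mul x y hx hy ihx ihy => simpa using mul_mem ihx ihy
  | inv x hx ihx => simpa using inv_mem ihx

lemma conj_mem_comm : ∀ g : Coprod A B, ∀ x ∈ commSubgroup A B,
    g * x * g⁻¹ ∈ commSubgroup A B := by
  have key : ∀ g : Coprod A B,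
      (∀ (a : A) (b : B), g * ⁅(Coprod.inl a : Coprod A B), Coprod.inr b⁆ * g⁻¹
        ∈ commSubgroup A B) →
      ∀ x ∈ commSubgroup A B, g * x * g⁻¹ ∈ commSubgroup A B := by
    intro g hg x hx
    induction hx using Subgroup.closure_induction with
    | mem x hx => obtain ⟨a, b, rfl⟩ := hx; exact hg a b
    | one => simpa using one_mem _
    | mul x y hx hy ihx ihy =>
      have : g * (x * y) * g⁻¹ = (g * x * g⁻¹) * (g * y * g⁻¹) := by group
      rw [this]; exact mul_mem ihx ihy
    | inv x hx ihx =>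
      have : g * x⁻¹ * g⁻¹ = (g * x * g⁻¹)⁻¹ := by group
      rw [this]; exact inv_mem ihx
  intro g
  induction g using Coprod.induction_on with
  | inl a =>
    refine key _ fun a' b => ?_
    have : Coprod.inl a * ⁅(Coprod.inl a' : Coprod A B), Coprod.inr b⁆ * (Coprod.inl a)⁻¹ =
        ⁅(Coprod.inl (a * a') : Coprod A B), Coprod.inr b⁆ *
          ⁅(Coprod.inl a : Coprod A B), Coprod.inr b⁆⁻¹ := by
      simp only [commutatorElement_def, map_mul]; group
    rw [this]
    exact mul_mem (Subgroup.subset_closure ⟨_, _, rfl⟩)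
      (inv_mem (Subgroup.subset_closure ⟨_, _, rfl⟩))
  | inr b =>
    refine key _ fun a b' => ?_
    have : (Coprod.inr b : Coprod A B) * ⁅(Coprod.inl a : Coprod A B), (Coprod.inr b' : Coprod A B)⁆ * (Coprod.inr b : Coprod A B)⁻¹ =
        ⁅(Coprod.inl a : Coprod A B), (Coprod.inr b : Coprod A B)⁆⁻¹ *
          ⁅(Coprod.inl a : Coprod A B), (Coprod.inr (b * b') : Coprod A B)⁆ := by
      simp only [commutatorElement_def, map_mul]; group
    rw [this]
    exact mul_mem (inv_mem (Subgroup.subset_closure ⟨_, _, rfl⟩))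
      (Subgroup.subset_closure ⟨_, _, rfl⟩)
  | mul x y ihx ihy =>
    intro z hz
    have : x * y * z * (x * y)⁻¹ = x * (y * z * y⁻¹) * x⁻¹ := by group
    rw [this]
    exact ihx _ (ihy _ hz)

instance : (commSubgroup A B).Normal :=
  ⟨fun x hx g => conj_mem_comm g x hx⟩

lemma comm_le_ker_toProd :
    commSubgroup A B ≤ (Coprod.toProd : Coprod A B →* A × B).ker := by
  rw [commSubgroup, Subgroup.closure_le]
  rintro x ⟨a, b, rfl⟩
  simp only [SetLike.mem_coe, MonoidHom.mem_ker, map_commutatorElement]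
  rw [commutatorElement_eq_one_iff_commute]
  simp only [Coprod.toProd_apply_inl, Coprod.toProd_apply_inr]
  exact Prod.ext (by simp) (by simp)

lemma ker_toProd_le_comm :
    (Coprod.toProd : Coprod A B →* A × B).ker ≤ commSubgroup A B := by
  intro x hx
  set q := QuotientGroup.mk' (commSubgroup A B) with hq
  have hcomm : ∀ (a : A) (b : B),
      Commute ((q.comp Coprod.inl) a) ((q.comp Coprod.inr) b) := by
    intro a b
    rw [← commutatorElement_eq_one_iff_commute]
    have : q ⁅(Coprod.inl a : Coprod A B), Coprod.inr b⁆ = 1 :=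
      (QuotientGroup.eq_one_iff _).2 (Subgroup.subset_closure ⟨a, b, rfl⟩)
    simpa [map_commutatorElement] using this
  set σ := MonoidHom.noncommCoprod (q.comp Coprod.inl) (q.comp Coprod.inr) hcomm with hσ
  have hfact : σ.comp Coprod.toProd = q := by
    apply Coprod.hom_ext <;> ext x <;>
      simp [hσ, MonoidHom.noncommCoprod, Coprod.toProd_apply_inl, Coprod.toProd_apply_inr]
  have : q x = 1 := by
    rw [← hfact]
    simp only [MonoidHom.comp_apply]
    rw [MonoidHom.mem_ker.1 hx, map_one]
  exact (QuotientGroup.eq_one_iff x).1 this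

end Aux

/-- The natural homomorphism `φ : A ∗ B → (A/M) ∗ (B/N)` maps `W(A ∗ B) ∩ [A,B]` onto
`W((A/M) ∗ (B/N)) ∩ [A/M, B/N]`. -/
theorem map_verbal_inf_comm {A B : Type*} [Group A] [Group B] (W : Set (FreeGroup ℕ))
    (M : Subgroup A) (N : Subgroup B) [M.Normal] [N.Normal] :
    (verbalSubgroup W (Coprod A B) ⊓ commSubgroup A B).map
        (Coprod.map (QuotientGroup.mk' M) (QuotientGroup.mk' N)) =
      verbalSubgroup W (Coprod (A ⧸ M) (B ⧸ N)) ⊓ commSubgroup (A ⧸ M) (B ⧸ N) := by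
  set φ := Coprod.map (QuotientGroup.mk' M) (QuotientGroup.mk' N) with hφdef
  have hsurj : Function.Surjective φ := by
    intro x
    induction x using Coprod.induction_on with
    | inl a =>
      obtain ⟨a', rfl⟩ := QuotientGroup.mk'_surjective M a
      exact ⟨Coprod.inl a', rfl⟩
    | inr b =>
      obtain ⟨b', rfl⟩ := QuotientGroup.mk'_surjective N b
      exact ⟨Coprod.inr b', rfl⟩
    | mul x y ihx ihy =>
      obtain ⟨x', rfl⟩ := ihx
      obtain ⟨y', rfl⟩ := ihy
      exact ⟨x' * y', map_mul _ _ _⟩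
  -- commuting square
  have hsq : (Coprod.toProd : Coprod (A ⧸ M) (B ⧸ N) →* (A ⧸ M) × (B ⧸ N)).comp φ =
      ((QuotientGroup.mk' M).prodMap (QuotientGroup.mk' N)).comp
        (Coprod.toProd : Coprod A B →* A × B) := by
    apply Coprod.hom_ext <;> ext x <;> simp [hφdef]
  apply le_antisymm
  · rintro x ⟨y, ⟨hyW, hyC⟩, rfl⟩
    exact ⟨mem_verbal_map φ hyW, mem_comm_map _ _ hyC⟩
  · rintro x' ⟨hW, hC⟩
    obtain ⟨y, hyW, rfl⟩ := verbal_le_map φ hsurj hW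
    set m := Coprod.fst y with hm
    set n := Coprod.snd y with hn
    have htop : Coprod.toProd (φ y) = 1 := comm_le_ker_toProd hC
    have hmn : ((QuotientGroup.mk' M) m, (QuotientGroup.mk' N) n) = (1, 1) := by
      have := congrArg (fun f => f y) (congrArg DFunLike.coe hsq)
      simp only [MonoidHom.comp_apply] at this
      rw [htop] at this
      rw [hm, hn, ← Coprod.fst_toProd, ← Coprod.snd_toProd]
      exact this.symm
    have hmM : m ∈ M := (QuotientGroup.eq_one_iff _).1 (congrArg Prod.fst hmn)
    have hnN : n ∈ N := (QuotientGroup.eq_one_iff _).1 (congrArg Prod.snd hmn)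
    have hmW : m ∈ verbalSubgroup W A := by
      have := mem_verbal_map ((MonoidHom.fst A B).comp Coprod.toProd) hyW
      simpa using this
    have hnW : n ∈ verbalSubgroup W B := by
      have := mem_verbal_map ((MonoidHom.snd A B).comp Coprod.toProd) hyW
      simpa using this
    refine ⟨Coprod.inl m⁻¹ * Coprod.inr n⁻¹ * y, ⟨?_, ?_⟩, ?_⟩
    · exact mul_mem (mul_mem (mem_verbal_map (Coprod.inl : A →* Coprod A B) (inv_mem hmW))
        (mem_verbal_map (Coprod.inr : B →* Coprod A B) (inv_mem hnW))) hyW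
    · apply ker_toProd_le_comm
      rw [MonoidHom.mem_ker]
      have : Coprod.toProd y = (m, n) := (Coprod.prod_mk_fst_snd y).symm
      simp only [map_mul, map_inv, Coprod.toProd_apply_inl, Coprod.toProd_apply_inr]
      rw [this]
      ext <;> simp
    · have h1 : (QuotientGroup.mk' M) m⁻¹ = 1 := by
        rw [QuotientGroup.mk'_apply, QuotientGroup.eq_one_iff]; exact inv_mem hmM
      have h2 : (QuotientGroup.mk' N) n⁻¹ = 1 := by
        rw [QuotientGroup.mk'_apply, QuotientGroup.eq_one_iff]; exact inv_mem hnN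
      rw [map_mul, map_mul, hφdef, Coprod.map_apply_inl, Coprod.map_apply_inr, h1, h2]
      simp [hφdef]
end

section
/- Let A and B be groups and W ⊆ F_∞ a set of words. If W(A) = A, then the verbal product A ∗_W B is isomorphic to the direct product A × B. -/
open Monoid
open scoped commutatorElement

/-- Key lemma: commutators `[inl a, inr b]` lie in the kernel when `W(A) = ⊤`. -/
theorem comm_mem_ker {A B : Type*} [Group A] [Group B] (W : Set (FreeGroup ℕ))
    (h : verbalSubgroup W A = ⊤) (a : A) (b : B) :
    ⁅(Coprod.inl a : Coprod A B), Coprod.inr b⁆ ∈ verbalProductKer W A B := by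
  apply Subgroup.subset_normalClosure
  refine ⟨?_, Subgroup.subset_closure ⟨a, b, rfl⟩⟩
  have hinl : (Coprod.inl a : Coprod A B) ∈ verbalSubgroup W (Coprod A B) := by
    apply verbalSubgroup_map_le W (Coprod.inl : A →* Coprod A B)
    exact ⟨a, by rw [h]; trivial, rfl⟩
  have hconj : (Coprod.inr b : Coprod A B) * (Coprod.inl a)⁻¹ * (Coprod.inr b)⁻¹ ∈
      verbalSubgroup W (Coprod A B) :=
    (verbalSubgroup_normal W (Coprod A B)).conj_mem _ (inv_mem hinl) _
  have : ⁅(Coprod.inl a : Coprod A B), Coprod.inr b⁆ =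
      Coprod.inl a * (Coprod.inr b * (Coprod.inl a)⁻¹ * (Coprod.inr b)⁻¹) := by
    simp [commutatorElement_def, mul_assoc]
  rw [this]
  exact mul_mem hinl hconj

/-- If `W(A) = A`, then `A ∗_W B` is isomorphic to the direct product `A × B`. -/
theorem verbalProduct_eq_directProduct {A B : Type*} [Group A] [Group B]
    (W : Set (FreeGroup ℕ)) (h : verbalSubgroup W A = ⊤) :
    Nonempty (VerbalProduct W A B ≃* A × B) := by
  set pi : Coprod A B →* A × B := Coprod.lift (MonoidHom.inl A B) (MonoidHom.inr A B) with hpi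
  have hker : verbalProductKer W A B ≤ pi.ker := by
    apply Subgroup.normalClosure_le_normal
    intro x hx
    have hx2 : x ∈ commSubgroup A B := hx.2
    have : commSubgroup A B ≤ pi.ker := by
      rw [commSubgroup, Subgroup.closure_le]
      rintro y ⟨a, b, rfl⟩
      simp only [MonoidHom.mem_ker, SetLike.mem_coe, map_commutatorElement]
      have : Commute (pi (Coprod.inl a)) (pi (Coprod.inr b)) := by
        simp [hpi, Coprod.lift_apply_inl, Coprod.lift_apply_inr, Commute, SemiconjBy,
          Prod.ext_iff]
      exact this.commutator_eq
    exact this hx2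
  -- the forward map
  set Φ : VerbalProduct W A B →* A × B := QuotientGroup.lift _ pi hker with hΦ
  have hΦq : ∀ x : Coprod A B, Φ (vq W A B x) = pi x := fun x => rfl
  -- the backward map
  have hcomm : ∀ (a : A) (b : B), Commute (vinl W A B a) (vinr W A B b) := by
    intro a b
    rw [Commute, SemiconjBy, ← mul_inv_eq_one]
    have : vinl W A B a * vinr W A B b * ((vinr W A B b) * (vinl W A B a))⁻¹ =
        vq W A B ⁅(Coprod.inl a : Coprod A B), Coprod.inr b⁆ := by
      simp [vinl, vinr, commutatorElement_def, mul_assoc]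
    rw [this]
    exact (QuotientGroup.eq_one_iff _).mpr (comm_mem_ker W h a b)
  set Ψ : A × B →* VerbalProduct W A B :=
    MonoidHom.noncommCoprod (vinl W A B) (vinr W A B) hcomm with hΨ
  refine ⟨MonoidHom.toMulEquiv Φ Ψ ?_ ?_⟩
  · -- Ψ ∘ Φ = id
    have surj : Function.Surjective (vq W A B) := QuotientGroup.mk'_surjective _
    apply MonoidHom.ext
    intro x
    obtain ⟨y, rfl⟩ := surj x
    have : (Ψ.comp Φ).comp (vq W A B) = vq W A B := by
      apply Coprod.hom_ext <;> ext c <;>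
        simp [hΦq, hpi, hΨ, Coprod.lift_apply_inl, Coprod.lift_apply_inr,
          MonoidHom.noncommCoprod_apply, vinl, vinr]
    calc (Ψ.comp Φ) (vq W A B y) = ((Ψ.comp Φ).comp (vq W A B)) y := rfl
      _ = vq W A B y := by rw [this]
  · -- Φ ∘ Ψ = id
    apply MonoidHom.ext
    rintro ⟨a, b⟩
    simp [hΨ, MonoidHom.noncommCoprod_apply, vinl, vinr, hΦq, hpi,
      Coprod.lift_apply_inl, Coprod.lift_apply_inr]
end

section
/- Let A and B be abelian groups, let k ≥ 2, and consider the k-solvable product A ∗_{s_k} B. Then the subgroup [A,B]^w of A ∗_{s_k} B is the free solvable group of derived length k−1 on the set {[a,b] : a ∈ A∖{1}, b ∈ B∖{1}}; that is, [A,B] is a free group with basis {[a,b] : a ∈ A∖{1}, b ∈ B∖{1}}, s_k(A ∗ B) equals the (k−1)-st derived subgroup of [A,B], and [A,B]^w is isomorphic to the quotient of the free group [A,B] by its (k−1)-st derived subgroup. -/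
open Monoid
open scoped commutatorElement

/-- The words `s_k` defining solvable products: `s_1 = [x_1, x_2]` and
`s_k(x_1, …, x_{2^k}) = [s_{k-1}(x_1, …, x_{2^{k-1}}), s_{k-1}(x_{2^{k-1}+1}, …, x_{2^k})]`
(generators indexed from `0`; the second factor is obtained by shifting the generators
by `2^{k-1}`). -/
def sWord : ℕ → FreeGroup ℕ
  | 0 => 1
  | 1 => ⁅FreeGroup.of 0, FreeGroup.of 1⁆
  | (k + 2) => ⁅sWord (k + 1),
      FreeGroup.lift (fun i => FreeGroup.of (i + 2 ^ (k + 1))) (sWord (k + 1))⁆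

/-- Iterated derived subgroup of a subgroup `H` of `G`, as a subgroup of `G`. -/
def iteratedDerived {G : Type*} [Group G] (H : Subgroup G) : ℕ → Subgroup G
  | 0 => H
  | (j + 1) => ⁅iteratedDerived H j, iteratedDerived H j⁆

instance derivedSeries_normal' (G : Type*) [Group G] (n : ℕ) : (derivedSeries G n).Normal :=
  derivedSeries_normal G n

section SolvableProductAux

open Coprod Subgroup

/-! ### Generalities on `sWord` and derived series -/

private lemma lift_shift_eval {G : Type*} [Group G] (f : ℕ → G) (m : ℕ) (w : FreeGroup ℕ) :
    FreeGroup.lift f (FreeGroup.lift (fun i => FreeGroup.of (i + m)) w)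
      = FreeGroup.lift (fun i => f (i + m)) w := by
  rw [lift_comp_eval (FreeGroup.lift f) (fun i => FreeGroup.of (i + m)) w]
  have h : (⇑(FreeGroup.lift f) ∘ fun i => FreeGroup.of (i + m)) = fun i => f (i + m) :=
    funext fun i => by simp
  rw [h]

private lemma sWord_eval_succ {G : Type*} [Group G] (k : ℕ) (hk : 1 ≤ k) (f : ℕ → G) :
    FreeGroup.lift f (sWord (k + 1))
      = ⁅FreeGroup.lift f (sWord k), FreeGroup.lift (fun i => f (i + 2 ^ k)) (sWord k)⁆ := by
  obtain ⟨j, rfl⟩ : ∃ j, k = j + 1 := ⟨k - 1, by omega⟩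
  rw [show sWord (j + 1 + 1) = ⁅sWord (j + 1),
      FreeGroup.lift (fun i => FreeGroup.of (i + 2 ^ (j + 1))) (sWord (j + 1))⁆ from rfl]
  rw [map_commutatorElement, lift_shift_eval]

private lemma sWord_eval_congr {G : Type*} [Group G] :
    ∀ (k : ℕ) (f g : ℕ → G), (∀ i, i < 2 ^ k → f i = g i) →
      FreeGroup.lift f (sWord k) = FreeGroup.lift g (sWord k)
  | 0, f, g, h => by rw [show sWord 0 = 1 from rfl, map_one, map_one]
  | 1, f, g, h => by
      rw [show sWord 1 = ⁅FreeGroup.of 0, FreeGroup.of 1⁆ from rfl, map_commutatorElement,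
        map_commutatorElement, FreeGroup.lift_apply_of, FreeGroup.lift_apply_of, FreeGroup.lift_apply_of,
        FreeGroup.lift_apply_of, h 0 (by norm_num), h 1 (by norm_num)]
  | (k+2), f, g, h => by
      have h2 : (2:ℕ) ^ (k + 2) = 2 ^ (k + 1) * 2 := pow_succ 2 (k+1)
      rw [sWord_eval_succ (k+1) (by omega), sWord_eval_succ (k+1) (by omega),
        sWord_eval_congr (k+1) f g (fun i hi => h i (by omega)),
        sWord_eval_congr (k+1) (fun i => f (i + 2 ^ (k+1))) (fun i => g (i + 2 ^ (k+1)))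
          (fun i hi => h _ (by omega))]

private lemma sWord_value_mem_derived {G : Type*} [Group G] :
    ∀ (k : ℕ), 1 ≤ k → ∀ f : ℕ → G, FreeGroup.lift f (sWord k) ∈ derivedSeries G k
  | 0, h, _ => absurd h (by omega)
  | 1, _, f => by
      rw [show sWord 1 = ⁅FreeGroup.of 0, FreeGroup.of 1⁆ from rfl, map_commutatorElement]
      rw [derivedSeries_succ, derivedSeries_zero]
      exact Subgroup.commutator_mem_commutator (Subgroup.mem_top _) (Subgroup.mem_top _)
  | (k+2), _, f => by
      rw [sWord_eval_succ (k+1) (by omega), derivedSeries_succ]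
      exact Subgroup.commutator_mem_commutator
        (sWord_value_mem_derived (k+1) (by omega) f)
        (sWord_value_mem_derived (k+1) (by omega) _)

private lemma verbal_le_derived {G : Type*} [Group G] (k : ℕ) (hk : 1 ≤ k) :
    verbalSubgroup {sWord k} G ≤ derivedSeries G k := by
  rw [verbalSubgroup, Subgroup.closure_le]
  rintro x ⟨w, hw, f, rfl⟩
  rw [Set.mem_singleton_iff] at hw
  subst hw
  exact sWord_value_mem_derived k hk f

universe u_derle

private lemma derived_le_verbal : ∀ (k : ℕ), 1 ≤ k →
    ∀ (G : Type u_derle) [Group G], derivedSeries G k ≤ verbalSubgroup {sWord k} G := by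
  intro k
  induction k with
  | zero => intro h; exact absurd h (by omega)
  | succ k ih =>
    intro _ G _
    rcases Nat.eq_zero_or_pos k with rfl | hkpos
    · rw [derivedSeries_succ, derivedSeries_zero, Subgroup.commutator_le]
      intro g _ h _
      refine Subgroup.subset_closure ⟨sWord 1, Set.mem_singleton _,
        (fun i => if i = 0 then g else h), ?_⟩
      rw [show sWord 1 = ⁅FreeGroup.of 0, FreeGroup.of 1⁆ from rfl, map_commutatorElement,
        FreeGroup.lift_apply_of, FreeGroup.lift_apply_of]
      simp
    · rw [derivedSeries_succ, Subgroup.commutator_le]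
      intro u hu v hv
      set V := verbalSubgroup {sWord (k+1)} G with hV
      set q : G →* G ⧸ V := QuotientGroup.mk' V with hq
      have hval1 : ∀ h : ℕ → G ⧸ V, FreeGroup.lift h (sWord (k+1)) = 1 := by
        intro h
        have hsurj : ∀ i, ∃ g : G, q g = h i := fun i => QuotientGroup.mk'_surjective V (h i)
        choose Ff hFf using hsurj
        have heq : h = ⇑q ∘ Ff := funext fun i => (hFf i).symm
        rw [heq, ← lift_comp_eval]
        have hmem : FreeGroup.lift Ff (sWord (k+1)) ∈ V :=
          Subgroup.subset_closure ⟨sWord (k+1), Set.mem_singleton _, Ff, rfl⟩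
        rw [hq, QuotientGroup.mk'_apply, QuotientGroup.eq_one_iff]
        exact hmem
      have hcommgen : ∀ f g : ℕ → G ⧸ V,
          Commute (FreeGroup.lift f (sWord k)) (FreeGroup.lift g (sWord k)) := by
        intro f g
        rw [← commutatorElement_eq_one_iff_commute]
        have hc : ⁅FreeGroup.lift f (sWord k), FreeGroup.lift g (sWord k)⁆
            = FreeGroup.lift (fun i => if i < 2 ^ k then f i else g (i - 2 ^ k))
                (sWord (k+1)) := by
          rw [sWord_eval_succ k hkpos]
          congr 1
          · exact (sWord_eval_congr k _ f (fun i hi => by simp [hi])).symm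
          · have hfun : (fun i => (fun j => if j < 2 ^ k then f j else g (j - 2 ^ k))
                (i + 2 ^ k)) = g := by
              funext i
              simp [show ¬ (i + 2 ^ k < 2 ^ k) from by omega]
            rw [hfun]
        rw [hc, hval1]
      have key : ∀ x ∈ verbalSubgroup {sWord k} (G ⧸ V),
          ∀ y ∈ verbalSubgroup {sWord k} (G ⧸ V), Commute x y := by
        intro x hx y hy
        rw [verbalSubgroup] at hx hy
        induction hx, hy using Subgroup.closure_induction₂ with
        | mem x y hx hy =>
          obtain ⟨w, hw, f, rfl⟩ := hx
          obtain ⟨w', hw', g, rfl⟩ := hy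
          rw [Set.mem_singleton_iff] at hw hw'
          subst hw; subst hw'
          exact hcommgen f g
        | one_left x hx => exact Commute.one_left x
        | one_right x hx => exact Commute.one_right x
        | mul_left x y z _ _ _ h1 h2 => exact h1.mul_left h2
        | mul_right y z x _ _ _ h1 h2 => exact h1.mul_right h2
        | inv_left x y _ _ h => exact h.inv_left
        | inv_right x y _ _ h => exact h.inv_right
      have hu' : q u ∈ derivedSeries (G ⧸ V) k :=
        map_derivedSeries_le_derivedSeries q k ⟨u, hu, rfl⟩
      have hv' : q v ∈ derivedSeries (G ⧸ V) k :=
        map_derivedSeries_le_derivedSeries q k ⟨v, hv, rfl⟩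
      have hcomm := key (q u) (ih hkpos (G ⧸ V) hu') (q v) (ih hkpos (G ⧸ V) hv')
      have hone : q ⁅u, v⁆ = 1 := by
        rw [map_commutatorElement]
        exact commutatorElement_eq_one_iff_commute.mpr hcomm
      rw [hq, QuotientGroup.mk'_apply, QuotientGroup.eq_one_iff] at hone
      exact hone

private lemma verbal_eq_derived {G : Type u_derle} [Group G] (k : ℕ) (hk : 1 ≤ k) :
    verbalSubgroup {sWord k} G = derivedSeries G k :=
  le_antisymm (verbal_le_derived k hk) (derived_le_verbal k hk G)

private lemma iteratedDerived_derivedSeries (G : Type*) [Group G] :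
    ∀ j, iteratedDerived (derivedSeries G 1) j = derivedSeries G (j + 1)
  | 0 => rfl
  | (j+1) => by
      rw [show iteratedDerived (derivedSeries G 1) (j+1)
          = ⁅iteratedDerived (derivedSeries G 1) j, iteratedDerived (derivedSeries G 1) j⁆
        from rfl, iteratedDerived_derivedSeries G j]
      exact (derivedSeries_succ G (j+1)).symm

private lemma iteratedDerived_top (G : Type*) [Group G] :
    ∀ j, iteratedDerived (⊤ : Subgroup G) j = derivedSeries G j
  | 0 => rfl
  | (j+1) => by
      rw [show iteratedDerived (⊤ : Subgroup G) (j+1)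
          = ⁅iteratedDerived (⊤ : Subgroup G) j, iteratedDerived (⊤ : Subgroup G) j⁆ from rfl,
        iteratedDerived_top G j]
      exact (derivedSeries_succ G j).symm

private lemma iteratedDerived_le {G : Type*} [Group G] (H : Subgroup G) :
    ∀ j, iteratedDerived H j ≤ H
  | 0 => le_refl H
  | (j+1) => by
      rw [show iteratedDerived H (j+1) = ⁅iteratedDerived H j, iteratedDerived H j⁆ from rfl,
        Subgroup.commutator_le]
      intro g hg h hh
      have hg' := iteratedDerived_le H j hg
      have hh' := iteratedDerived_le H j hh
      rw [commutatorElement_def]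
      exact mul_mem (mul_mem (mul_mem hg' hh') (inv_mem hg')) (inv_mem hh')

private lemma map_iteratedDerived {G H : Type*} [Group G] [Group H] (f : G →* H)
    (K : Subgroup G) : ∀ j, (iteratedDerived K j).map f = iteratedDerived (K.map f) j
  | 0 => rfl
  | (j+1) => by
      rw [show iteratedDerived K (j+1) = ⁅iteratedDerived K j, iteratedDerived K j⁆ from rfl,
        Subgroup.map_commutator, map_iteratedDerived f K j]
      rfl

section CommutatorBasis

variable {A B : Type*} [CommGroup A] [CommGroup B]

private abbrev FG (A B : Type*) [Group A] [Group B] : Type _ :=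
  FreeGroup {p : A × B // p.1 ≠ 1 ∧ p.2 ≠ 1}

open scoped Classical in
private noncomputable def ψ (a : A) (b : B) : FG A B :=
  if h : a ≠ 1 ∧ b ≠ 1 then FreeGroup.of ⟨(a, b), h⟩ else 1

@[simp] private lemma ψ_one_left (b : B) : ψ (1 : A) b = 1 := by simp [ψ]
@[simp] private lemma ψ_one_right (a : A) : ψ a (1 : B) = 1 := by simp [ψ]

private lemma of_eq_ψ (p : {p : A × B // p.1 ≠ 1 ∧ p.2 ≠ 1}) :
    FreeGroup.of p = ψ p.1.1 p.1.2 := by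
  obtain ⟨⟨a, b⟩, h⟩ := p
  simp [ψ, h.1, h.2]

private noncomputable def αF (x : A) : FG A B →* FG A B :=
  FreeGroup.lift fun p => ψ (x * p.1.1) p.1.2 * (ψ x p.1.2)⁻¹

private noncomputable def βF (y : B) : FG A B →* FG A B :=
  FreeGroup.lift fun p => (ψ p.1.1 y)⁻¹ * ψ p.1.1 (y * p.1.2)

private lemma αF_ψ (x a : A) (b : B) : αF x (ψ a b) = ψ (x * a) b * (ψ x b)⁻¹ := by
  rcases eq_or_ne b 1 with rfl | hb
  · simp
  rcases eq_or_ne a 1 with rfl | ha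
  · simp
  · rw [show ψ a b = FreeGroup.of (⟨(a, b), ha, hb⟩ : {p : A × B // p.1 ≠ 1 ∧ p.2 ≠ 1}) from by
      simp [ψ, ha, hb]]
    simp [αF]

private lemma βF_ψ (y : B) (a : A) (b : B) : βF y (ψ a b) = (ψ a y)⁻¹ * ψ a (y * b) := by
  rcases eq_or_ne b 1 with rfl | hb
  · simp
  rcases eq_or_ne a 1 with rfl | ha
  · simp
  · rw [show ψ a b = FreeGroup.of (⟨(a, b), ha, hb⟩ : {p : A × B // p.1 ≠ 1 ∧ p.2 ≠ 1}) from by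
      simp [ψ, ha, hb]]
    simp [βF]

private lemma αF_one : (αF 1 : FG A B →* FG A B) = MonoidHom.id _ := by
  apply FreeGroup.ext_hom; intro p
  rw [MonoidHom.id_apply, of_eq_ψ p, αF_ψ]
  simp

private lemma βF_one : (βF 1 : FG A B →* FG A B) = MonoidHom.id _ := by
  apply FreeGroup.ext_hom; intro p
  rw [MonoidHom.id_apply, of_eq_ψ p, βF_ψ]
  simp

private lemma αF_comp (x y : A) (w : FG A B) : αF x (αF y w) = αF (x * y) w := by
  have h : (αF x : FG A B →* FG A B).comp (αF y) = αF (x * y) := by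
    apply FreeGroup.ext_hom; intro p
    rw [MonoidHom.comp_apply, of_eq_ψ p, αF_ψ, map_mul, map_inv, αF_ψ, αF_ψ, αF_ψ]
    simp only [mul_assoc]
    group
  exact DFunLike.congr_fun h w

private lemma βF_comp (x y : B) (w : FG A B) : βF x (βF y w) = βF (x * y) w := by
  have h : (βF x : FG A B →* FG A B).comp (βF y) = βF (x * y) := by
    apply FreeGroup.ext_hom; intro p
    rw [MonoidHom.comp_apply, of_eq_ψ p, βF_ψ, map_mul, map_inv, βF_ψ, βF_ψ, βF_ψ]
    simp only [mul_assoc]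
    group
  exact DFunLike.congr_fun h w

private lemma αβ_key (a : A) (b : B) (w : FG A B) :
    αF a (βF b (αF a⁻¹ (βF b⁻¹ w))) = ψ a b * w * (ψ a b)⁻¹ := by
  have h : ((αF a : FG A B →* FG A B).comp ((βF b).comp ((αF a⁻¹).comp (βF b⁻¹)))) =
      (MulAut.conj (ψ a b)).toMonoidHom := by
    apply FreeGroup.ext_hom; intro p
    simp only [MonoidHom.comp_apply, MulEquiv.coe_toMonoidHom, MulAut.conj_apply]
    rw [of_eq_ψ p]
    simp only [βF_ψ, αF_ψ, map_mul, map_inv, mul_inv_cancel, inv_mul_cancel,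
      mul_inv_cancel_left, inv_mul_cancel_left, ψ_one_left, ψ_one_right]
    group
  exact DFunLike.congr_fun h w

private noncomputable def φh (A B : Type*) [CommGroup A] [CommGroup B] : FG A B →* Coprod A B :=
  FreeGroup.lift fun p => ⁅(Coprod.inl p.1.1 : Coprod A B), Coprod.inr p.1.2⁆

private lemma φh_ψ (a : A) (b : B) :
    φh A B (ψ a b) = ⁅(Coprod.inl a : Coprod A B), Coprod.inr b⁆ := by
  rcases eq_or_ne b 1 with rfl | hb
  · simp
  rcases eq_or_ne a 1 with rfl | ha
  · simp
  · rw [show ψ a b = FreeGroup.of (⟨(a, b), ha, hb⟩ : {p : A × B // p.1 ≠ 1 ∧ p.2 ≠ 1}) from by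
      simp [ψ, ha, hb]]
    simp [φh]

private lemma φh_αF (x : A) (c : FG A B) :
    φh A B (αF x c) = Coprod.inl x * φh A B c * (Coprod.inl x)⁻¹ := by
  have h : (φh A B).comp (αF x)
      = (MulAut.conj (Coprod.inl x : Coprod A B)).toMonoidHom.comp (φh A B) := by
    apply FreeGroup.ext_hom; intro p
    simp only [MonoidHom.comp_apply, MulEquiv.coe_toMonoidHom, MulAut.conj_apply]
    rw [of_eq_ψ p, αF_ψ, map_mul, map_inv, φh_ψ, φh_ψ, φh_ψ]
    simp only [commutatorElement_def, map_mul]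
    group
  exact DFunLike.congr_fun h c

private lemma φh_βF (y : B) (c : FG A B) :
    φh A B (βF y c) = Coprod.inr y * φh A B c * (Coprod.inr y)⁻¹ := by
  have h : (φh A B).comp (βF y)
      = (MulAut.conj (Coprod.inr y : Coprod A B)).toMonoidHom.comp (φh A B) := by
    apply FreeGroup.ext_hom; intro p
    simp only [MonoidHom.comp_apply, MulEquiv.coe_toMonoidHom, MulAut.conj_apply]
    rw [of_eq_ψ p, βF_ψ, map_mul, map_inv, φh_ψ, φh_ψ, φh_ψ]
    simp only [commutatorElement_def, map_mul]
    group
  exact DFunLike.congr_fun h c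

private noncomputable def actA (A B : Type*) [CommGroup A] [CommGroup B] :
    A →* Function.End (FG A B × A × B) where
  toFun x t := (αF x t.1, x * t.2.1, t.2.2)
  map_one' := by
    funext t
    show (αF 1 t.1, 1 * t.2.1, t.2.2) = t
    rw [αF_one]
    simp
  map_mul' x y := by
    funext t
    show (αF (x * y) t.1, (x * y) * t.2.1, t.2.2)
      = (αF x (αF y t.1), x * (y * t.2.1), t.2.2)
    rw [αF_comp, mul_assoc]

private noncomputable def actB (A B : Type*) [CommGroup A] [CommGroup B] :
    B →* Function.End (FG A B × A × B) where
  toFun y t := (βF y t.1 * (ψ t.2.1 y)⁻¹, t.2.1, y * t.2.2)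
  map_one' := by
    funext t
    show (βF 1 t.1 * (ψ t.2.1 1)⁻¹, t.2.1, 1 * t.2.2) = t
    rw [βF_one]
    simp
  map_mul' y y' := by
    funext t
    show (βF (y * y') t.1 * (ψ t.2.1 (y * y'))⁻¹, t.2.1, (y * y') * t.2.2)
      = (βF y (βF y' t.1 * (ψ t.2.1 y')⁻¹) * (ψ t.2.1 y)⁻¹, t.2.1, y * (y' * t.2.2))
    rw [map_mul, map_inv, βF_comp, βF_ψ, mul_assoc]
    refine Prod.ext ?_ rfl
    show _ = _
    group

private noncomputable def Θh (A B : Type*) [CommGroup A] [CommGroup B] :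
    Coprod A B →* Function.End (FG A B × A × B) :=
  Coprod.lift (actA A B) (actB A B)

private lemma Θh_inl (x : A) (t : FG A B × A × B) :
    Θh A B (Coprod.inl x) t = (αF x t.1, x * t.2.1, t.2.2) := by
  rw [Θh, Coprod.lift_apply_inl]; rfl

private lemma Θh_inr (y : B) (t : FG A B × A × B) :
    Θh A B (Coprod.inr y) t = (βF y t.1 * (ψ t.2.1 y)⁻¹, t.2.1, y * t.2.2) := by
  rw [Θh, Coprod.lift_apply_inr]; rfl

private noncomputable def elemh (t : FG A B × A × B) : Coprod A B :=
  φh A B t.1 * Coprod.inl t.2.1 * Coprod.inr t.2.2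

private lemma elemh_act (g : Coprod A B) : ∀ t, g * elemh t = elemh (Θh A B g t) := by
  induction g using Coprod.induction_on with
  | inl x =>
    intro t
    rw [Θh_inl]
    show Coprod.inl x * (φh A B t.1 * Coprod.inl t.2.1 * Coprod.inr t.2.2)
      = φh A B (αF x t.1) * Coprod.inl (x * t.2.1) * Coprod.inr t.2.2
    rw [φh_αF, map_mul]
    group
  | inr y =>
    intro t
    rw [Θh_inr]
    show Coprod.inr y * (φh A B t.1 * Coprod.inl t.2.1 * Coprod.inr t.2.2)
      = φh A B (βF y t.1 * (ψ t.2.1 y)⁻¹) * Coprod.inl t.2.1 * Coprod.inr (y * t.2.2)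
    rw [map_mul, map_inv, φh_βF, φh_ψ, map_mul]
    simp only [commutatorElement_def]
    group
  | mul x y hx hy =>
    intro t
    rw [mul_assoc, hy t, hx (Θh A B y t), map_mul]
    rfl

private lemma Θφ_spec (w : FG A B) :
    ∀ c : FG A B, Θh A B (φh A B w) (c, 1, 1) = (w * c, 1, 1) := by
  induction w using FreeGroup.induction_on with
  | C1 =>
    intro c
    rw [map_one, map_one, one_mul]
    rfl
  | of p =>
    intro c
    have hcomm : φh A B (FreeGroup.of p)
        = Coprod.inl p.1.1 * Coprod.inr p.1.2 * Coprod.inl p.1.1⁻¹ * Coprod.inr p.1.2⁻¹ := by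
      show FreeGroup.lift _ (FreeGroup.of p) = _
      rw [FreeGroup.lift_apply_of, commutatorElement_def, map_inv, map_inv]
    rw [hcomm, map_mul, map_mul, map_mul]
    show Θh A B (Coprod.inl p.1.1) (Θh A B (Coprod.inr p.1.2) (Θh A B (Coprod.inl p.1.1⁻¹)
      (Θh A B (Coprod.inr p.1.2⁻¹) (c, 1, 1)))) = _
    rw [Θh_inr, Θh_inl, Θh_inr, Θh_inl]
    simp only [ψ_one_left, inv_one, mul_one, one_mul, mul_inv_cancel]
    rw [map_mul, map_inv, αβ_key, αF_ψ, mul_inv_cancel, ψ_one_left, one_mul]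
    simp only [inv_inv, inv_mul_cancel_right]
    rw [of_eq_ψ p]
  | inv_of p hp =>
    intro c
    have h2 : ∀ t, Θh A B (φh A B (FreeGroup.of p)⁻¹) (Θh A B (φh A B (FreeGroup.of p)) t) = t := by
      intro t
      have hone : Θh A B (φh A B (FreeGroup.of p)⁻¹) * Θh A B (φh A B (FreeGroup.of p)) = 1 := by
        rw [← map_mul, ← map_mul, inv_mul_cancel, map_one, map_one]
      calc Θh A B (φh A B (FreeGroup.of p)⁻¹) (Θh A B (φh A B (FreeGroup.of p)) t)
          = (Θh A B (φh A B (FreeGroup.of p)⁻¹) * Θh A B (φh A B (FreeGroup.of p))) t := rfl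
        _ = t := by rw [hone]; rfl
    have h3 := hp ((FreeGroup.of p)⁻¹ * c)
    rw [mul_inv_cancel_left] at h3
    rw [map_inv]
    calc Θh A B (φh A B (FreeGroup.of p))⁻¹ (c, 1, 1)
        = Θh A B (φh A B (FreeGroup.of p))⁻¹ (Θh A B (φh A B (FreeGroup.of p))
            ((FreeGroup.of p)⁻¹ * c, 1, 1)) := by rw [h3]
      _ = ((FreeGroup.of p)⁻¹ * c, 1, 1) := by
          have := h2 ((FreeGroup.of p)⁻¹ * c, 1, 1)
          rw [map_inv] at this
          exact this
  | mul x y hx hy =>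
    intro c
    rw [map_mul, map_mul]
    calc (Θh A B (φh A B x) * Θh A B (φh A B y)) (c, 1, 1)
        = Θh A B (φh A B x) (Θh A B (φh A B y) (c, 1, 1)) := rfl
      _ = Θh A B (φh A B x) (y * c, 1, 1) := by rw [hy c]
      _ = (x * (y * c), 1, 1) := hx (y * c)
      _ = (x * y * c, 1, 1) := by rw [mul_assoc]

private lemma φh_inj : Function.Injective (φh A B) := by
  intro w w' h
  have h1 := Θφ_spec (A := A) (B := B) w 1
  have h2 := Θφ_spec (A := A) (B := B) w' 1
  rw [h] at h1
  have h3 := h1.symm.trans h2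
  simpa using congrArg Prod.fst h3

private noncomputable def πh (A B : Type*) [CommGroup A] [CommGroup B] : Coprod A B →* A × B :=
  Coprod.lift (MonoidHom.inl A B) (MonoidHom.inr A B)

private lemma πh_φh (w : FG A B) : πh A B (φh A B w) = 1 := by
  have h : (πh A B).comp (φh A B) = 1 := by
    apply FreeGroup.ext_hom; intro p
    rw [MonoidHom.comp_apply, MonoidHom.one_apply,
      show φh A B (FreeGroup.of p) = ⁅(Coprod.inl p.1.1 : Coprod A B), Coprod.inr p.1.2⁆ from
        FreeGroup.lift_apply_of, map_commutatorElement]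
    exact commutatorElement_eq_one_iff_commute.mpr (mul_comm _ _)
  exact DFunLike.congr_fun h w

private lemma comm_le_commutator :
    commSubgroup A B ≤ ⁅(⊤ : Subgroup (Coprod A B)), ⊤⁆ := by
  rw [commSubgroup, Subgroup.closure_le]
  rintro x ⟨a, b, rfl⟩
  exact Subgroup.commutator_mem_commutator (Subgroup.mem_top _) (Subgroup.mem_top _)

private lemma commutator_le_kerπ :
    ⁅(⊤ : Subgroup (Coprod A B)), ⊤⁆ ≤ (πh A B).ker := by
  rw [Subgroup.commutator_le]
  intro g _ h _
  rw [MonoidHom.mem_ker, map_commutatorElement]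
  exact commutatorElement_eq_one_iff_commute.mpr (mul_comm _ _)

private lemma kerπ_le_range : (πh A B).ker ≤ (φh A B).range := by
  intro g hg
  set t := Θh A B g ((1 : FG A B), 1, 1) with ht
  have h := elemh_act g ((1 : FG A B), 1, 1)
  rw [show elemh ((1 : FG A B), (1 : A), (1 : B)) = 1 from by simp [elemh], mul_one, ← ht] at h
  have hπ : (t.2.1, t.2.2) = ((1 : A), (1 : B)) := by
    have h4 := congrArg (πh A B) h
    rw [MonoidHom.mem_ker.mp hg, elemh, map_mul, map_mul, πh_φh, one_mul] at h4
    rw [πh, Coprod.lift_apply_inl, Coprod.lift_apply_inr] at h4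
    simpa [Prod.ext_iff, eq_comm] using h4
  refine ⟨t.1, ?_⟩
  have h5 : t.2.1 = 1 := congrArg Prod.fst hπ
  have h6 : t.2.2 = 1 := congrArg Prod.snd hπ
  rw [h, elemh, h5, h6, map_one, map_one, mul_one, mul_one]

private lemma range_le_comm : (φh A B).range ≤ commSubgroup A B := by
  rw [φh, FreeGroup.range_lift_eq_closure, Subgroup.closure_le]
  rintro x ⟨p, rfl⟩
  exact Subgroup.subset_closure ⟨p.1.1, p.1.2, rfl⟩

private lemma φh_range : (φh A B).range = commSubgroup A B :=
  le_antisymm range_le_comm (comm_le_commutator.trans (commutator_le_kerπ.trans kerπ_le_range))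

private lemma derived_one_eq_comm :
    derivedSeries (Coprod A B) 1 = commSubgroup A B := by
  have h1 : derivedSeries (Coprod A B) 1 = ⁅(⊤ : Subgroup (Coprod A B)), ⊤⁆ := by
    rw [derivedSeries_succ, derivedSeries_zero]
  rw [h1]
  exact le_antisymm (commutator_le_kerπ.trans (kerπ_le_range.trans range_le_comm))
    comm_le_commutator

end CommutatorBasis

end SolvableProductAux

/-- For abelian `A`, `B` and `k ≥ 2`, `[A,B]^w ⊆ A ∗_{s_k} B` is the free solvable group
of derived length `k-1` on `{[a,b] : a ≠ 1, b ≠ 1}`: `[A,B]` is free with that basis,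
`s_k(A ∗ B)` is the `(k-1)`-st derived subgroup of `[A,B]`, and `[A,B]^w` is isomorphic
to the quotient of the free group on that basis by the `(k-1)`-st term of its derived
series. -/
theorem solvableProduct_commW_free_solvable {A B : Type*} [CommGroup A] [CommGroup B]
    (k : ℕ) (hk : 2 ≤ k) :
    (∃ e : FreeGroup {p : A × B // p.1 ≠ 1 ∧ p.2 ≠ 1} ≃* commSubgroup A B,
      ∀ p : {p : A × B // p.1 ≠ 1 ∧ p.2 ≠ 1},
        (e (FreeGroup.of p) : Coprod A B) =
          ⁅(Coprod.inl p.1.1 : Coprod A B), Coprod.inr p.1.2⁆) ∧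
    verbalSubgroup {sWord k} (Coprod A B) = iteratedDerived (commSubgroup A B) (k - 1) ∧
    Nonempty ((commW {sWord k} A B) ≃*
      (FreeGroup {p : A × B // p.1 ≠ 1 ∧ p.2 ≠ 1} ⧸
        derivedSeries (FreeGroup {p : A × B // p.1 ≠ 1 ∧ p.2 ≠ 1}) (k - 1))) := by
  refine ⟨⟨(MonoidHom.ofInjective φh_inj).trans (MulEquiv.subgroupCongr φh_range),
      fun p => ?_⟩, ?_, ?_⟩
  · rw [MulEquiv.trans_apply, MulEquiv.subgroupCongr_apply, MonoidHom.ofInjective_apply]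
    exact FreeGroup.lift_apply_of
  · rw [verbal_eq_derived k (by omega)]
    conv_lhs => rw [show k = (k - 1 - 1) + 1 + 1 from by omega]
    rw [← iteratedDerived_derivedSeries (Coprod A B) (k - 1 - 1 + 1), derived_one_eq_comm,
      show k - 1 - 1 + 1 = k - 1 from by omega]
  · have part2 : verbalSubgroup {sWord k} (Coprod A B)
        = iteratedDerived (commSubgroup A B) (k - 1) := by
      rw [verbal_eq_derived k (by omega)]
      conv_lhs => rw [show k = (k - 1 - 1) + 1 + 1 from by omega]
      rw [← iteratedDerived_derivedSeries (Coprod A B) (k - 1 - 1 + 1), derived_one_eq_comm,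
        show k - 1 - 1 + 1 = k - 1 from by omega]
    have hVle : verbalSubgroup {sWord k} (Coprod A B) ≤ commSubgroup A B := by
      rw [part2]; exact iteratedDerived_le _ _
    have hN : verbalProductKer {sWord k} A B = verbalSubgroup {sWord k} (Coprod A B) := by
      rw [verbalProductKer, inf_of_le_left hVle]
      exact Subgroup.normalClosure_eq_self _
    set ξ : FG A B →* VerbalProduct {sWord k} A B := (vq {sWord k} A B).comp (φh A B) with hξ
    have hmapd : iteratedDerived (commSubgroup A B) (k - 1)
        = (derivedSeries (FG A B) (k - 1)).map (φh A B) := by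
      rw [← φh_range, MonoidHom.range_eq_map, ← map_iteratedDerived, iteratedDerived_top]
    have hker : ξ.ker = derivedSeries (FG A B) (k - 1) := by
      rw [hξ, ← MonoidHom.comap_ker, vq, QuotientGroup.ker_mk', verbalProductKer,
        inf_of_le_left hVle, Subgroup.normalClosure_eq_self, part2, hmapd,
        Subgroup.comap_map_eq_self_of_injective φh_inj]
    have hrange : ξ.range = commW {sWord k} A B := by
      rw [hξ, MonoidHom.range_comp, φh_range]
      rfl
    exact ⟨(MulEquiv.subgroupCongr hrange.symm).trans
      ((QuotientGroup.quotientKerEquivRange ξ).symm.trans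
        (QuotientGroup.quotientMulEquivOfEq hker))⟩
end

section
/- Let {G_i}_{i∈I} be a family of groups and let I_0 ⊆ I. Let W ⊆ F_∞ be a set of words, let ĩ : ∗_{i∈I_0} G_i → ∗_{i∈I} G_i be the natural embedding of free products, and let q, q̃ be the quotient homomorphisms onto the verbal products ∗^W_{i∈I_0} G_i and ∗^W_{i∈I} G_i respectively. Then ĩ maps ker(q) into ker(q̃), so it induces a homomorphism i_{I_0} : ∗^W_{i∈I_0} G_i → ∗^W_{i∈I} G_i with i_{I_0} ∘ q = q̃ ∘ ĩ, and this induced homomorphism i_{I_0} is injective. -/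
open Monoid
open scoped commutatorElement

/-- The cartesian subgroup of the free product `∗_{i} G_i`: the normal subgroup generated
by the commutators `[g_i, g_j]` with `g_i ∈ G_i`, `g_j ∈ G_j`, `i ≠ j`. -/
def cartesianSubgroupI {ι : Type*} (G : ι → Type*) [∀ i, Group (G i)] :
    Subgroup (Monoid.CoprodI G) :=
  Subgroup.normalClosure
    {x | ∃ (i j : ι) (_ : i ≠ j) (a : G i) (b : G j),
      x = ⁅Monoid.CoprodI.of a, Monoid.CoprodI.of b⁆}

/-- The kernel of the verbal product of a family: (the normal closure of)
`W(∗_i G_i) ∩ [G_i]`.  Since this intersection is in fact normal, taking the normal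
closure does not change the subgroup. -/
def verbalKerI {ι : Type*} (W : Set (FreeGroup ℕ)) (G : ι → Type*) [∀ i, Group (G i)] :
    Subgroup (Monoid.CoprodI G) :=
  Subgroup.normalClosure
    ((verbalSubgroup W (Monoid.CoprodI G) ⊓ cartesianSubgroupI G : Subgroup _) :
      Set (Monoid.CoprodI G))

instance verbalKerI_normal {ι : Type*} (W : Set (FreeGroup ℕ)) (G : ι → Type*)
    [∀ i, Group (G i)] : (verbalKerI W G).Normal := Subgroup.normalClosure_normal

/-- The verbal product `∗^W_{i ∈ ι} G_i` of a family of groups. -/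
abbrev VerbalProductI {ι : Type*} (W : Set (FreeGroup ℕ)) (G : ι → Type*)
    [∀ i, Group (G i)] : Type _ :=
  Monoid.CoprodI G ⧸ verbalKerI W G

/-- The natural embedding `∗_{i ∈ I₀} G_i → ∗_{i ∈ I} G_i` of free products. -/
def subfamilyHom {ι : Type*} (G : ι → Type*) [∀ i, Group (G i)] (I₀ : Set ι) :
    Monoid.CoprodI (fun i : I₀ => G i) →* Monoid.CoprodI G :=
  Monoid.CoprodI.lift fun i : I₀ => (Monoid.CoprodI.of : G i →* Monoid.CoprodI G)


section AuxEmbed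

open Monoid Subgroup

theorem verbal_le_comap {G H : Type*} [Group G] [Group H] (W : Set (FreeGroup ℕ))
    (φ : G →* H) : verbalSubgroup W G ≤ (verbalSubgroup W H).comap φ := by
  refine Subgroup.closure_le _ |>.2 ?_
  rintro x ⟨w, hw, f, rfl⟩
  exact Subgroup.subset_closure ⟨w, hw, φ ∘ f, (lift_comp_eval φ f w).symm⟩

open Classical in
/-- The retraction of the big free product onto the subfamily free product. -/
noncomputable def retractHom {ι : Type*} (G : ι → Type*) [∀ i, Group (G i)] (I₀ : Set ι) :
    Monoid.CoprodI G →* Monoid.CoprodI (fun i : I₀ => G i) :=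
  Monoid.CoprodI.lift fun i =>
    if h : i ∈ I₀ then (Monoid.CoprodI.of (M := fun j : I₀ => G j) (i := ⟨i, h⟩)) else 1

theorem retract_comp {ι : Type*} (G : ι → Type*) [∀ i, Group (G i)] (I₀ : Set ι) :
    (retractHom G I₀).comp (subfamilyHom G I₀) = MonoidHom.id _ := by
  apply Monoid.CoprodI.ext_hom
  intro i
  ext g
  simp only [retractHom, subfamilyHom, MonoidHom.comp_apply, MonoidHom.id_apply,
    Monoid.CoprodI.lift_of]
  rw [dif_pos i.2]

theorem cartesian_le_comap_sub {ι : Type*} (G : ι → Type*) [∀ i, Group (G i)] (I₀ : Set ι) :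
    cartesianSubgroupI (fun i : I₀ => G i) ≤
      (cartesianSubgroupI G).comap (subfamilyHom G I₀) := by
  haveI : ((cartesianSubgroupI G).comap (subfamilyHom G I₀)).Normal :=
    Subgroup.Normal.comap Subgroup.normalClosure_normal _
  apply Subgroup.normalClosure_le_normal
  rintro x ⟨i, j, hij, a, b, rfl⟩
  refine Subgroup.subset_normalClosure ?_
  refine ⟨i, j, fun h => hij (Subtype.coe_injective h), a, b, ?_⟩
  rw [map_commutatorElement]
  simp [subfamilyHom]

theorem cartesian_le_comap_retract {ι : Type*} (G : ι → Type*) [∀ i, Group (G i)]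
    (I₀ : Set ι) :
    cartesianSubgroupI G ≤
      (cartesianSubgroupI (fun i : I₀ => G i)).comap (retractHom G I₀) := by
  haveI : ((cartesianSubgroupI (fun i : I₀ => G i)).comap (retractHom G I₀)).Normal :=
    Subgroup.Normal.comap Subgroup.normalClosure_normal _
  apply Subgroup.normalClosure_le_normal
  rintro x ⟨i, j, hij, a, b, rfl⟩
  simp only [SetLike.mem_coe, Subgroup.mem_comap]
  rw [map_commutatorElement]
  by_cases hi : i ∈ I₀
  · by_cases hj : j ∈ I₀
    · refine Subgroup.subset_normalClosure ?_
      refine ⟨⟨i, hi⟩, ⟨j, hj⟩, by simpa using hij, a, b, ?_⟩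
      simp [retractHom, dif_pos hi, dif_pos hj]
    · have : (retractHom G I₀) (Monoid.CoprodI.of b) = 1 := by
        simp [retractHom, dif_neg hj]
      rw [this, commutatorElement_def]
      simpa using Subgroup.one_mem _
  · have : (retractHom G I₀) (Monoid.CoprodI.of a) = 1 := by
      simp [retractHom, dif_neg hi]
    rw [this, commutatorElement_def]
    simpa using Subgroup.one_mem _

theorem verbalKer_le_comap_sub {ι : Type*} (G : ι → Type*) [∀ i, Group (G i)] (I₀ : Set ι)
    (W : Set (FreeGroup ℕ)) :
    verbalKerI W (fun i : I₀ => G i) ≤ (verbalKerI W G).comap (subfamilyHom G I₀) := by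
  haveI : ((verbalKerI W G).comap (subfamilyHom G I₀)).Normal :=
    Subgroup.Normal.comap (verbalKerI_normal W G) _
  apply Subgroup.normalClosure_le_normal
  rintro x hx
  rcases hx with ⟨hV, hC⟩
  refine Subgroup.subset_normalClosure ?_
  exact ⟨verbal_le_comap W (subfamilyHom G I₀) hV, cartesian_le_comap_sub G I₀ hC⟩

theorem verbalKer_le_comap_retract {ι : Type*} (G : ι → Type*) [∀ i, Group (G i)]
    (I₀ : Set ι) (W : Set (FreeGroup ℕ)) :
    verbalKerI W G ≤ (verbalKerI W (fun i : I₀ => G i)).comap (retractHom G I₀) := by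
  haveI : ((verbalKerI W (fun i : I₀ => G i)).comap (retractHom G I₀)).Normal :=
    Subgroup.Normal.comap (verbalKerI_normal W _) _
  apply Subgroup.normalClosure_le_normal
  rintro x hx
  rcases hx with ⟨hV, hC⟩
  refine Subgroup.subset_normalClosure ?_
  exact ⟨verbal_le_comap W (retractHom G I₀) hV, cartesian_le_comap_retract G I₀ hC⟩

end AuxEmbed

/-- The natural embedding of free products maps the kernel defining the verbal product
over `I₀` into the one over `I`, and the induced homomorphism between the verbal
products is injective and compatible with the quotient maps. -/
theorem verbalProductI_subfamily_embedding {ι : Type*} (G : ι → Type*) [∀ i, Group (G i)]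
    (I₀ : Set ι) (W : Set (FreeGroup ℕ)) :
    (verbalKerI W (fun i : I₀ => G i)).map (subfamilyHom G I₀) ≤ verbalKerI W G ∧
    ∃ ι₀ : VerbalProductI W (fun i : I₀ => G i) →* VerbalProductI W G,
      (∀ x : Monoid.CoprodI (fun i : I₀ => G i),
        ι₀ (QuotientGroup.mk x) = QuotientGroup.mk (subfamilyHom G I₀ x)) ∧
      Function.Injective ι₀ := by
  have hle : verbalKerI W (fun i : I₀ => G i) ≤ (verbalKerI W G).comap (subfamilyHom G I₀) :=
    verbalKer_le_comap_sub G I₀ W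
  constructor
  · exact Subgroup.map_le_iff_le_comap.2 hle
  · refine ⟨QuotientGroup.map _ _ (subfamilyHom G I₀) hle, fun x => rfl, ?_⟩
    rw [injective_iff_map_eq_one]
    intro y hy
    obtain ⟨x, rfl⟩ := QuotientGroup.mk_surjective y
    have h1 : (QuotientGroup.mk (subfamilyHom G I₀ x) :
        VerbalProductI W G) = 1 := hy
    have h2 : subfamilyHom G I₀ x ∈ verbalKerI W G :=
      (QuotientGroup.eq_one_iff _).1 h1
    have h3 : retractHom G I₀ (subfamilyHom G I₀ x) ∈ verbalKerI W (fun i : I₀ => G i) :=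
      verbalKer_le_comap_retract G I₀ W h2
    have h4 : retractHom G I₀ (subfamilyHom G I₀ x) = x :=
      DFunLike.congr_fun (retract_comp G I₀) x
    rw [h4] at h3
    exact (QuotientGroup.eq_one_iff _).2 h3
end
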